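/- Let F be a finite field with q elements, and suppose α₁, α₂ ∈ F are distinct. Then the number of 3×3 matrices over F that are diagonalizable with both α₁ and α₂ as eigenvalues and no other eigenvalues equals 2q⁴ + 2q³ + 2q². -/

import Mathlib

open Matrix MulAction

set_option linter.unusedSectionVars false

section Aux

variable {F : Type} [Field F] [Fintype F] [DecidableEq F]

/- ## Block matrix embedding `emb B t = [[B, 0], [0, t]]` -/

private def emb (B : Matrix (Fin 2) (Fin 2) F) (t : F) : Matrix (Fin 3) (Fin 3) F :=
  !![B 0 0, B 0 1, 0; B 1 0, B 1 1, 0; 0, 0, t]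

private def subM (A : Matrix (Fin 3) (Fin 3) F) : Matrix (Fin 2) (Fin 2) F :=
  !![A 0 0, A 0 1; A 1 0, A 1 1]

private lemma subM_emb (B : Matrix (Fin 2) (Fin 2) F) (t : F) : subM (emb B t) = B := by
  ext i j; fin_cases i <;> fin_cases j <;> rfl

private lemma emb_apply22 (B : Matrix (Fin 2) (Fin 2) F) (t : F) : emb B t 2 2 = t := rfl

private lemma emb_mul (B B' : Matrix (Fin 2) (Fin 2) F) (t t' : F) :
    emb B t * emb B' t' = emb (B * B') (t * t') := by
  ext i j; fin_cases i <;> fin_cases j <;>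
    simp [emb, Matrix.mul_apply, Fin.sum_univ_three, Fin.sum_univ_two]

private lemma emb_one : emb (1 : Matrix (Fin 2) (Fin 2) F) 1 = 1 := by
  ext i j; fin_cases i <;> fin_cases j <;> rfl

private lemma emb_comm (a b : F) (B : Matrix (Fin 2) (Fin 2) F) (t : F) :
    emb B t * Matrix.diagonal ![a,a,b] = Matrix.diagonal ![a,a,b] * emb B t := by
  ext i j; fin_cases i <;> fin_cases j <;>
    simp [emb, Matrix.mul_diagonal, Matrix.diagonal_mul, mul_comm]

private lemma comm_struct {a b : F} (hab : a ≠ b) {M : Matrix (Fin 3) (Fin 3) F}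
    (h : M * Matrix.diagonal ![a,a,b] = Matrix.diagonal ![a,a,b] * M) :
    M = emb (subM M) (M 2 2) := by
  have e : ∀ i j, M i j * (![a,a,b] j) = (![a,a,b] i) * M i j := by
    intro i j
    have := congrFun (congrFun h i) j
    simpa [Matrix.mul_diagonal, Matrix.diagonal_mul] using this
  have hba : b - a ≠ 0 := sub_ne_zero.2 (Ne.symm hab)
  have hab' : a - b ≠ 0 := sub_ne_zero.2 hab
  have z : ∀ (i j : Fin 3), (![a,a,b] j = b → ![a,a,b] i = a → M i j = 0) ∧
      (![a,a,b] j = a → ![a,a,b] i = b → M i j = 0) := by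
    intro i j
    constructor
    · intro hj hi
      have h0 := e i j
      rw [hj, hi] at h0
      have : M i j * (b - a) = 0 := by linear_combination h0
      exact (mul_eq_zero.1 this).resolve_right hba
    · intro hj hi
      have h0 := e i j
      rw [hj, hi] at h0
      have : M i j * (a - b) = 0 := by linear_combination h0
      exact (mul_eq_zero.1 this).resolve_right hab'
  have z02 : M 0 2 = 0 := (z 0 2).1 rfl rfl
  have z12 : M 1 2 = 0 := (z 1 2).1 rfl rfl
  have z20 : M 2 0 = 0 := (z 2 0).2 rfl rfl
  have z21 : M 2 1 = 0 := (z 2 1).2 rfl rfl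
  ext i j; fin_cases i <;> fin_cases j <;> simp [emb, subM, z02, z12, z20, z21]

private lemma emb_eq_one {B : Matrix (Fin 2) (Fin 2) F} {t : F} (h : emb B t = 1) :
    B = 1 ∧ t = 1 := by
  constructor
  · have h2 := congrArg subM h
    rw [subM_emb] at h2
    rw [h2]; ext i j; fin_cases i <;> fin_cases j <;> rfl
  · have h2 := congrArg (fun M => M 2 2) h
    simpa [emb_apply22] using h2

/- ## The stabilizer of `diagonal ![a,a,b]` -/

private lemma mem_stab_iff (c : Matrix (Fin 3) (Fin 3) F)
    (g : ConjAct (Matrix (Fin 3) (Fin 3) F)ˣ) :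
    g ∈ stabilizer (ConjAct (Matrix (Fin 3) (Fin 3) F)ˣ) c ↔
      ((ConjAct.ofConjAct g : (Matrix (Fin 3) (Fin 3) F)ˣ) : Matrix (Fin 3) (Fin 3) F) * c
        = c * ((ConjAct.ofConjAct g : (Matrix (Fin 3) (Fin 3) F)ˣ) : Matrix (Fin 3) (Fin 3) F) := by
  rw [mem_stabilizer_iff, ConjAct.units_smul_def, Units.mul_inv_eq_iff_eq_mul]

private lemma stab_units {a b : F} (hab : a ≠ b) (u : (Matrix (Fin 3) (Fin 3) F)ˣ)
    (h : (u : Matrix (Fin 3) (Fin 3) F) * Matrix.diagonal ![a,a,b]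
        = Matrix.diagonal ![a,a,b] * (u : Matrix (Fin 3) (Fin 3) F)) :
    u.val = emb (subM u.val) (u.val 2 2) ∧ u.inv = emb (subM u.inv) (u.inv 2 2) ∧
    subM u.val * subM u.inv = 1 ∧ subM u.inv * subM u.val = 1 ∧
    u.val 2 2 * u.inv 2 2 = 1 ∧ u.inv 2 2 * u.val 2 2 = 1 := by
  have hC : Commute (u : Matrix (Fin 3) (Fin 3) F) (Matrix.diagonal ![a,a,b]) := h
  have hC' := hC.units_inv_left
  have s1 := comm_struct hab hC
  have s2 : u.inv = emb (subM u.inv) (u.inv 2 2) := comm_struct hab hC'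
  refine ⟨s1, s2, ?_, ?_, ?_, ?_⟩
  · have hv := u.val_inv
    rw [s1, s2, emb_mul] at hv
    exact (emb_eq_one hv).1
  · have hv := u.inv_val
    rw [s2, s1, emb_mul] at hv
    exact (emb_eq_one hv).1
  · have hv := u.val_inv
    rw [s1, s2, emb_mul] at hv
    exact (emb_eq_one hv).2
  · have hv := u.inv_val
    rw [s2, s1, emb_mul] at hv
    exact (emb_eq_one hv).2

private noncomputable def stabFun {a b : F} (hab : a ≠ b)
    (g : stabilizer (ConjAct (Matrix (Fin 3) (Fin 3) F)ˣ) (Matrix.diagonal ![a,a,b])) :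
    (Matrix (Fin 2) (Fin 2) F)ˣ × Fˣ :=
  let u := ConjAct.ofConjAct g.val
  have h := stab_units hab u ((mem_stab_iff _ g.val).1 g.2)
  (⟨subM u.val, subM u.inv, h.2.2.1, h.2.2.2.1⟩,
   ⟨u.val 2 2, u.inv 2 2, h.2.2.2.2.1, h.2.2.2.2.2⟩)

private lemma stabFun_bij {a b : F} (hab : a ≠ b) :
    Function.Bijective (stabFun (F := F) hab) := by
  constructor
  · intro g₁ g₂ he
    have h1 := stab_units hab (ConjAct.ofConjAct g₁.val) ((mem_stab_iff _ g₁.val).1 g₁.2)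
    have h2 := stab_units hab (ConjAct.ofConjAct g₂.val) ((mem_stab_iff _ g₂.val).1 g₂.2)
    have eB : subM (ConjAct.ofConjAct g₁.val).val = subM (ConjAct.ofConjAct g₂.val).val :=
      congrArg (fun p => (p.1 : Matrix (Fin 2) (Fin 2) F)) he
    have et : (ConjAct.ofConjAct g₁.val).val 2 2 = (ConjAct.ofConjAct g₂.val).val 2 2 :=
      congrArg (fun p => (p.2 : F)) he
    have : (ConjAct.ofConjAct g₁.val) = (ConjAct.ofConjAct g₂.val) := by
      apply Units.ext
      rw [h1.1, h2.1, eB, et]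
    apply Subtype.ext
    exact ConjAct.ofConjAct.injective this
  · rintro ⟨B, t⟩
    refine ⟨⟨ConjAct.toConjAct ⟨emb B.val t.val, emb B.inv t.inv, ?_, ?_⟩, ?_⟩, ?_⟩
    · rw [emb_mul, B.val_inv, t.val_inv, emb_one]
    · rw [emb_mul, B.inv_val, t.inv_val, emb_one]
    · rw [mem_stab_iff, ConjAct.ofConjAct_toConjAct]
      exact emb_comm a b B.val t.val
    · apply Prod.ext <;> [skip; skip] <;> apply Units.ext <;>
        simp only [stabFun, ConjAct.ofConjAct_toConjAct] <;>
        first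
          | exact subM_emb _ _
          | exact emb_apply22 _ _

private lemma card_stab {a b : F} (hab : a ≠ b) :
    Nat.card (stabilizer (ConjAct (Matrix (Fin 3) (Fin 3) F)ˣ) (Matrix.diagonal ![a,a,b]))
      = Nat.card (Matrix (Fin 2) (Fin 2) F)ˣ * Nat.card Fˣ := by
  rw [Nat.card_eq_of_bijective _ (stabFun_bij hab), Nat.card_prod]

/- ## Orbit membership for diagonal matrices with range `{α₁, α₂}` -/

private lemma diag3 (x y z : F) : Matrix.diagonal ![x,y,z] = !![x,0,0;0,y,0;0,0,z] := by
  ext i j; fin_cases i <;> fin_cases j <;> rfl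

private def swapU (s : Matrix (Fin 3) (Fin 3) F) (h : s * s = 1) : (Matrix (Fin 3) (Fin 3) F)ˣ :=
  ⟨s, s, h, h⟩

private lemma s12_mul : (!![(1:F),0,0;0,0,1;0,1,0] : Matrix (Fin 3) (Fin 3) F) *
    !![1,0,0;0,0,1;0,1,0] = 1 := by
  ext i j; fin_cases i <;> fin_cases j <;>
    simp [Matrix.mul_apply, Fin.sum_univ_three, Matrix.one_apply, Matrix.vecHead, Matrix.vecTail]

private lemma s02_mul : (!![(0:F),0,1;0,1,0;1,0,0] : Matrix (Fin 3) (Fin 3) F) *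
    !![0,0,1;0,1,0;1,0,0] = 1 := by
  ext i j; fin_cases i <;> fin_cases j <;>
    simp [Matrix.mul_apply, Fin.sum_univ_three, Matrix.one_apply, Matrix.vecHead, Matrix.vecTail]

private lemma s12_diag (x y z : F) : (!![(1:F),0,0;0,0,1;0,1,0] : Matrix (Fin 3) (Fin 3) F) *
    Matrix.diagonal ![x,y,z] * !![1,0,0;0,0,1;0,1,0] = Matrix.diagonal ![x,z,y] := by
  rw [diag3, diag3]
  ext i j; fin_cases i <;> fin_cases j <;>
    simp [Matrix.mul_apply, Fin.sum_univ_three, Matrix.vecHead, Matrix.vecTail]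

private lemma s02_diag (x y z : F) : (!![(0:F),0,1;0,1,0;1,0,0] : Matrix (Fin 3) (Fin 3) F) *
    Matrix.diagonal ![x,y,z] * !![0,0,1;0,1,0;1,0,0] = Matrix.diagonal ![z,y,x] := by
  rw [diag3, diag3]
  ext i j; fin_cases i <;> fin_cases j <;>
    simp [Matrix.mul_apply, Fin.sum_univ_three, Matrix.vecHead, Matrix.vecTail]

private lemma mem_orbit_of_conj {c x : Matrix (Fin 3) (Fin 3) F}
    (s : Matrix (Fin 3) (Fin 3) F) (hs : s * s = 1) (h : s * c * s = x) :
    x ∈ orbit (ConjAct (Matrix (Fin 3) (Fin 3) F)ˣ) c := by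
  refine ⟨ConjAct.toConjAct (swapU s hs), ?_⟩
  show ConjAct.toConjAct (swapU s hs) • c = x
  rw [ConjAct.units_smul_def, ConjAct.ofConjAct_toConjAct]
  have h2 : ((swapU s hs)⁻¹ : (Matrix (Fin 3) (Fin 3) F)ˣ).val = s := rfl
  rw [h2]
  exact h

private lemma diag_mem_orbit {α₁ α₂ : F} (hα : α₁ ≠ α₂) {d : Fin 3 → F}
    (hd : Set.range d = {α₁, α₂}) :
    Matrix.diagonal d ∈ orbit (ConjAct (Matrix (Fin 3) (Fin 3) F)ˣ) (Matrix.diagonal ![α₁,α₁,α₂])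
    ∪ orbit (ConjAct (Matrix (Fin 3) (Fin 3) F)ˣ) (Matrix.diagonal ![α₂,α₂,α₁]) := by
  have hmem : ∀ i, d i = α₁ ∨ d i = α₂ := by
    intro i
    have : d i ∈ Set.range d := Set.mem_range_self i
    rw [hd] at this
    simpa using this
  have h1 : ∃ i, d i = α₁ := by
    have : α₁ ∈ Set.range d := by rw [hd]; simp
    simpa using this
  have h2 : ∃ i, d i = α₂ := by
    have : α₂ ∈ Set.range d := by rw [hd]; simp
    simpa using this
  have hde : d = ![d 0, d 1, d 2] := by
    funext i; fin_cases i <;> rfl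
  rcases hmem 0 with e0 | e0 <;> rcases hmem 1 with e1 | e1 <;> rcases hmem 2 with e2 | e2 <;>
    rw [hde, e0, e1, e2]
  · exfalso
    obtain ⟨i, hi⟩ := h2
    have : d i = α₁ := by fin_cases i <;> assumption
    exact hα (this ▸ hi)
  · exact Or.inl (mem_orbit_self _)
  · exact Or.inl (mem_orbit_of_conj _ s12_mul (s12_diag _ _ _))
  · exact Or.inr (mem_orbit_of_conj _ s02_mul (s02_diag _ _ _))
  · exact Or.inl (mem_orbit_of_conj _ s02_mul (s02_diag _ _ _))
  · exact Or.inr (mem_orbit_of_conj _ s12_mul (s12_diag _ _ _))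
  · exact Or.inr (mem_orbit_self _)
  · exfalso
    obtain ⟨i, hi⟩ := h1
    have : d i = α₂ := by fin_cases i <;> assumption
    exact hα (hi ▸ this)

private lemma range_vec (a b : F) : Set.range ![a,a,b] = {a,b} := by
  ext x
  simp [Fin.exists_fin_succ, Fin.exists_fin_two, or_comm, or_assoc]

private lemma trace_orbit {c x : Matrix (Fin 3) (Fin 3) F}
    (h : x ∈ orbit (ConjAct (Matrix (Fin 3) (Fin 3) F)ˣ) c) : x.trace = c.trace := by
  obtain ⟨g, rfl⟩ := h
  show (g • c).trace = c.trace
  rw [ConjAct.units_smul_def, Matrix.trace_mul_comm, ← mul_assoc, ← Units.val_mul,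
    inv_mul_cancel, Units.val_one, one_mul]

/- ## Arithmetic -/

private lemma arith_key {q : ℕ} (hq : 2 ≤ q) :
    (q^4 + q^3 + q^2) * ((q^2 - q^0) * (q^2 - q^1) * (q - 1))
      = (q^3 - q^0) * (q^3 - q^1) * (q^3 - q^2) := by
  have h1 : (1:ℕ) ≤ q := by omega
  have h2 : q ^ 1 ≤ q ^ 2 := Nat.pow_le_pow_right (by omega) (by omega)
  have h3 : (1:ℕ) ≤ q ^ 2 := Nat.one_le_pow _ _ (by omega)
  have h4 : (1:ℕ) ≤ q ^ 3 := Nat.one_le_pow _ _ (by omega)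
  have h5 : q ^ 1 ≤ q ^ 3 := Nat.pow_le_pow_right (by omega) (by omega)
  have h6 : q ^ 2 ≤ q ^ 3 := Nat.pow_le_pow_right (by omega) (by omega)
  have h3' : q ^ 0 ≤ q ^ 2 := by simpa using h3
  have h4' : q ^ 0 ≤ q ^ 3 := by simpa using h4
  apply Nat.cast_injective (R := ℤ)
  push_cast [Nat.cast_sub h2, Nat.cast_sub h3', Nat.cast_sub h4', Nat.cast_sub h5,
    Nat.cast_sub h6, Nat.cast_sub h1]
  ring

private lemma stab_pos {q : ℕ} (hq : 2 ≤ q) :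
    0 < (q^2 - q^0) * (q^2 - q^1) * (q - 1) := by
  have a1 : q^0 < q^2 := Nat.pow_lt_pow_right (by omega) (by omega)
  have a2 : q^1 < q^2 := Nat.pow_lt_pow_right (by omega) (by omega)
  have a : 0 < q^2 - q^0 := by omega
  have b : 0 < q^2 - q^1 := by omega
  have c : 0 < q - 1 := by omega
  exact Nat.mul_pos (Nat.mul_pos a b) c

/- ## Orbit cardinality -/

private lemma card_orbit {a b : F} (hab : a ≠ b) :
    (orbit (ConjAct (Matrix (Fin 3) (Fin 3) F)ˣ) (Matrix.diagonal ![a,a,b])).ncard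
      = Fintype.card F ^ 4 + Fintype.card F ^ 3 + Fintype.card F ^ 2 := by
  classical
  set q := Fintype.card F with hq
  have hq2 : 2 ≤ q := Fintype.one_lt_card
  set c := Matrix.diagonal ![a,a,b] with hc
  letI : Fintype ↥(orbit (ConjAct (Matrix (Fin 3) (Fin 3) F)ˣ) c) :=
    Set.Finite.fintype (Set.toFinite _)
  have key := MulAction.card_orbit_mul_card_stabilizer_eq_card_group
    (ConjAct (Matrix (Fin 3) (Fin 3) F)ˣ) c
  rw [← Nat.card_eq_fintype_card, ← Nat.card_eq_fintype_card, ← Nat.card_eq_fintype_card] at key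
  have hG : Nat.card (ConjAct (Matrix (Fin 3) (Fin 3) F)ˣ)
      = (q^3 - q^0) * (q^3 - q^1) * (q^3 - q^2) := by
    have : Nat.card (ConjAct (Matrix (Fin 3) (Fin 3) F)ˣ) = Nat.card (GL (Fin 3) F) := rfl
    rw [this, Matrix.card_GL_field, Fin.prod_univ_three]
    norm_num
    rfl
  have hK : Nat.card (stabilizer (ConjAct (Matrix (Fin 3) (Fin 3) F)ˣ) c)
      = (q^2 - q^0) * (q^2 - q^1) * (q - 1) := by
    rw [hc, card_stab hab]
    have hGL2 : Nat.card (Matrix (Fin 2) (Fin 2) F)ˣ = (q^2 - q^0) * (q^2 - q^1) := by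
      have : Nat.card (Matrix (Fin 2) (Fin 2) F)ˣ = Nat.card (GL (Fin 2) F) := rfl
      rw [this, Matrix.card_GL_field, Fin.prod_univ_two]
      norm_num
      rfl
    have hU : Nat.card Fˣ = q - 1 := by
      rw [Nat.card_eq_fintype_card, Fintype.card_units, hq]
    rw [hGL2, hU]
  rw [hG, hK] at key
  have key2 : (q^4 + q^3 + q^2) * ((q^2 - q^0) * (q^2 - q^1) * (q - 1))
      = (q^3 - q^0) * (q^3 - q^1) * (q^3 - q^2) := arith_key hq2
  have : (orbit (ConjAct (Matrix (Fin 3) (Fin 3) F)ˣ) c).ncard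
      = Nat.card ↥(orbit (ConjAct (Matrix (Fin 3) (Fin 3) F)ˣ) c) := rfl
  rw [this]
  exact Nat.eq_of_mul_eq_mul_right (stab_pos hq2) (key.trans key2.symm)

end Aux

/-- The number of `3 × 3` matrices over a finite field with `q` elements that are
diagonalizable with eigenvalue set exactly `{α₁, α₂}` (with `α₁ ≠ α₂`) equals
`2q⁴ + 2q³ + 2q²`. -/
theorem stmt_6 (F : Type) [Field F] [Fintype F] [DecidableEq F]
    (q : ℕ) (hq : Fintype.card F = q) (α₁ α₂ : F) (hα : α₁ ≠ α₂) :
    Nat.card {A : Matrix (Fin 3) (Fin 3) F //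
        ∃ (d : Fin 3 → F) (P : (Matrix (Fin 3) (Fin 3) F)ˣ),
          Set.range d = {α₁, α₂} ∧
          A = (P : Matrix (Fin 3) (Fin 3) F) * Matrix.diagonal d *
              ((P⁻¹ : _) : Matrix (Fin 3) (Fin 3) F)} =
      2 * q ^ 4 + 2 * q ^ 3 + 2 * q ^ 2 := by
  classical
  subst hq
  set q := Fintype.card F with hq
  set c₁ := Matrix.diagonal ![α₁,α₁,α₂] with hc₁
  set c₂ := Matrix.diagonal ![α₂,α₂,α₁] with hc₂
  set G := ConjAct (Matrix (Fin 3) (Fin 3) F)ˣ with hG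
  have hS : {A : Matrix (Fin 3) (Fin 3) F |
      ∃ (d : Fin 3 → F) (P : (Matrix (Fin 3) (Fin 3) F)ˣ),
        Set.range d = {α₁, α₂} ∧
        A = (P : Matrix (Fin 3) (Fin 3) F) * Matrix.diagonal d *
            ((P⁻¹ : _) : Matrix (Fin 3) (Fin 3) F)} = orbit G c₁ ∪ orbit G c₂ := by
    ext A
    constructor
    · rintro ⟨d, P, hd, rfl⟩
      have key : (P : Matrix (Fin 3) (Fin 3) F) * Matrix.diagonal d *
          ((P⁻¹ : _) : Matrix (Fin 3) (Fin 3) F) = ConjAct.toConjAct P • Matrix.diagonal d := by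
        rw [ConjAct.units_smul_def, ConjAct.ofConjAct_toConjAct]
      rw [key]
      rcases diag_mem_orbit hα hd with h | h
      · left
        obtain ⟨g, hg⟩ := h
        refine ⟨ConjAct.toConjAct P * g, ?_⟩
        show (ConjAct.toConjAct P * g) • c₁ = _
        rw [mul_smul]
        exact congrArg (fun y => ConjAct.toConjAct P • y) hg
      · right
        obtain ⟨g, hg⟩ := h
        refine ⟨ConjAct.toConjAct P * g, ?_⟩
        show (ConjAct.toConjAct P * g) • c₂ = _
        rw [mul_smul]
        exact congrArg (fun y => ConjAct.toConjAct P • y) hg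
    · rintro (⟨g, rfl⟩ | ⟨g, rfl⟩)
      · refine ⟨![α₁,α₁,α₂], ConjAct.ofConjAct g, range_vec α₁ α₂, ?_⟩
        show g • c₁ = _
        rw [ConjAct.units_smul_def, hc₁]
      · refine ⟨![α₂,α₂,α₁], ConjAct.ofConjAct g, ?_, ?_⟩
        · rw [range_vec α₂ α₁, Set.pair_comm]
        · show g • c₂ = _
          rw [ConjAct.units_smul_def, hc₂]
  have hdisj : Disjoint (orbit G c₁) (orbit G c₂) := by
    rw [Set.disjoint_left]
    intro x h1 h2
    have t1 := trace_orbit h1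
    have t2 := trace_orbit h2
    have e : c₁.trace = c₂.trace := t1.symm.trans t2
    rw [hc₁, hc₂, Matrix.trace_diagonal, Matrix.trace_diagonal] at e
    simp only [Fin.sum_univ_three] at e
    apply hα
    have : (![α₁,α₁,α₂] 0 + ![α₁,α₁,α₂] 1 + ![α₁,α₁,α₂] 2 : F)
        = ![α₂,α₂,α₁] 0 + ![α₂,α₂,α₁] 1 + ![α₂,α₂,α₁] 2 := e
    simp only [Matrix.cons_val_zero, Matrix.cons_val_one, Matrix.head_cons,
      Matrix.cons_val_two, Matrix.tail_cons] at this
    linear_combination this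
  have e1 : Nat.card {A : Matrix (Fin 3) (Fin 3) F //
      ∃ (d : Fin 3 → F) (P : (Matrix (Fin 3) (Fin 3) F)ˣ),
        Set.range d = {α₁, α₂} ∧
        A = (P : Matrix (Fin 3) (Fin 3) F) * Matrix.diagonal d *
            ((P⁻¹ : _) : Matrix (Fin 3) (Fin 3) F)}
      = (orbit G c₁ ∪ orbit G c₂ : Set (Matrix (Fin 3) (Fin 3) F)).ncard := by
    rw [← hS]
    rfl
  rw [e1, Set.ncard_union_eq hdisj (Set.toFinite _) (Set.toFinite _),
    card_orbit hα, card_orbit (Ne.symm hα)]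
  ring
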